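/- arXiv:1601.05491 — 3 statements merged into one kernel-verified Lean document; each statement's English description precedes it below -/
import Mathlib

section
/- Let p be a positive nonsquare integer and let m, n be positive integers satisfying n² − p·m² = 1. Then √p = (m·p/n) · Σ_{k=0}^{∞} ((1/2)_k / k!) · (1/(p·m² + 1))^k, where the series on the right converges. -/
/-- The shifted factorial (Pochhammer symbol): `(x)_0 = 1` and
`(x)_n = x * (x+1) * ... * (x+n-1)`. -/
noncomputable def shiftedFactorial (x : ℝ) (n : ℕ) : ℝ :=
  ∏ i ∈ Finset.range n, (x + i)

open Set Filter

lemma shiftedFactorial_succ (x : ℝ) (k : ℕ) :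
    shiftedFactorial x (k + 1) = shiftedFactorial x k * (x + k) :=
  Finset.prod_range_succ _ _

lemma sf_nonneg (k : ℕ) : 0 ≤ shiftedFactorial (1/2) k :=
  Finset.prod_nonneg fun i _ => by positivity

lemma sf_le_factorial (k : ℕ) : shiftedFactorial (1/2) k ≤ (Nat.factorial k : ℝ) := by
  induction k with
  | zero => simp [shiftedFactorial]
  | succ k ih =>
      rw [shiftedFactorial_succ, Nat.factorial_succ, Nat.cast_mul]
      have h1 : (1/2 : ℝ) + k ≤ (k + 1 : ℝ) := by linarith
      calc shiftedFactorial (1/2) k * ((1/2 : ℝ) + k)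
          ≤ (Nat.factorial k : ℝ) * (k + 1 : ℝ) := by
            apply mul_le_mul ih h1 (by positivity) (by positivity)
        _ = ((k + 1 : ℕ) : ℝ) * (Nat.factorial k : ℝ) := by push_cast; ring

/-- Auxiliary family of functions: the iterated derivatives of `(1-t)^(-1/2)`. -/
noncomputable def sfg (k : ℕ) (t : ℝ) : ℝ :=
  shiftedFactorial (1/2) k * (1 - t) ^ (-(1/2 : ℝ) - k)

lemma sfg_zero (t : ℝ) : sfg 0 t = (1 - t) ^ (-(1/2 : ℝ)) := by
  simp [sfg, shiftedFactorial]

lemma sfg_hasDerivAt {t : ℝ} (ht : t < 1) (k : ℕ) :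
    HasDerivAt (sfg k) (sfg (k + 1) t) t := by
  have h1t : (0:ℝ) < 1 - t := by linarith
  have h1 : HasDerivAt (fun s : ℝ => 1 - s) (-1) t := by
    exact (hasDerivAt_id' t).const_sub 1
  have h2 : HasDerivAt (fun y : ℝ => y ^ (-(1/2 : ℝ) - k))
      ((-(1/2 : ℝ) - k) * (1 - t) ^ (-(1/2 : ℝ) - k - 1)) (1 - t) :=
    Real.hasDerivAt_rpow_const (Or.inl h1t.ne')
  have h3 : HasDerivAt (fun s : ℝ => (1 - s) ^ (-(1/2 : ℝ) - k))
      ((-(1/2 : ℝ) - k) * (1 - t) ^ (-(1/2 : ℝ) - k - 1) * (-1)) t := h2.comp t h1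
  have h4 := h3.const_mul (shiftedFactorial (1/2) k)
  refine h4.congr_deriv ?_
  rw [sfg, shiftedFactorial_succ]
  have : (-(1/2 : ℝ) - k - 1) = -(1/2 : ℝ) - ((k : ℕ) + 1 : ℕ) := by push_cast; ring
  rw [show (-(1/2 : ℝ) - ((k + 1 : ℕ) : ℝ)) = -(1/2 : ℝ) - k - 1 by push_cast; ring]
  ring

lemma key_hasSum {x : ℝ} (hx0 : 0 < x) (hx : x < 1/2) :
    HasSum (fun k : ℕ => shiftedFactorial (1/2) k / (Nat.factorial k : ℝ) * x ^ k)
      ((1 - x) ^ (-(1/2 : ℝ))) := by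
  have hx1 : x < 1 := by linarith
  have h1x : (0:ℝ) < 1 - x := by linarith
  set f : ℝ → ℝ := fun t => (1 - t) ^ (-(1/2 : ℝ)) with hf
  set c : ℕ → ℝ := fun k => shiftedFactorial (1/2) k / (Nat.factorial k : ℝ) * x ^ k with hc
  have hcn : ∀ k, 0 ≤ c k := fun k => by
    have := sf_nonneg k
    have : (0:ℝ) ≤ shiftedFactorial (1/2) k / (Nat.factorial k : ℝ) := by positivity
    positivity
  -- iterated derivatives within Icc 0 x
  have hud : UniqueDiffOn ℝ (Icc (0:ℝ) x) := uniqueDiffOn_Icc hx0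
  have hfg0 : ∀ t, f t = sfg 0 t := fun t => (sfg_zero t).symm
  have hlt1 : ∀ t ∈ Icc (0:ℝ) x, t < 1 := fun t ht => lt_of_le_of_lt ht.2 hx1
  have hiter : ∀ k, ∀ t ∈ Icc (0:ℝ) x, iteratedDerivWithin k f (Icc 0 x) t = sfg k t := by
    intro k
    induction k with
    | zero => intro t ht; simp [iteratedDerivWithin_zero, hfg0 t]
    | succ k ih =>
        intro t ht
        rw [iteratedDerivWithin_succ]
        have heq : Set.EqOn (iteratedDerivWithin k f (Icc 0 x)) (sfg k) (Icc 0 x) := ih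
        rw [derivWithin_congr heq (ih t ht)]
        exact ((sfg_hasDerivAt (hlt1 t ht) k).hasDerivWithinAt).derivWithin (hud t ht)
  have hcont : ∀ N : ℕ, ContDiffOn ℝ N f (Icc (0:ℝ) x) := by
    intro N t ht
    apply ContDiffAt.contDiffWithinAt
    have h1t : (1 - t) ≠ 0 := by have := hlt1 t ht; intro h; linarith [sub_eq_zero.mp h]
    exact (Real.contDiffAt_rpow_const_of_ne h1t).comp t
      ((contDiff_const.sub contDiff_id).contDiffAt)
  have hdiff : ∀ N : ℕ, DifferentiableOn ℝ (iteratedDerivWithin N f (Icc 0 x)) (Ioo 0 x) := by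
    intro N
    have hdg : DifferentiableOn ℝ (sfg N) (Ioo 0 x) := fun t ht =>
      ((sfg_hasDerivAt (hlt1 t (Ioo_subset_Icc_self ht)) N).differentiableAt).differentiableWithinAt
    exact hdg.congr fun t ht => hiter N t (Ioo_subset_Icc_self ht)
  -- remainder bound
  set r : ℝ := x / (1 - x) with hr
  have hr0 : 0 ≤ r := by positivity
  have hr1 : r < 1 := by rw [div_lt_one h1x]; linarith
  set C : ℝ := (1 - x) ^ (-(1/2 : ℝ)) with hC
  have hC0 : 0 < C := Real.rpow_pos_of_pos h1x _
  have hbound : ∀ N : ℕ, |∑ k ∈ Finset.range (N + 1), c k - C| ≤ C * r ^ (N + 1) := by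
    intro N
    obtain ⟨ξ, hξ, hrem⟩ := taylor_mean_remainder_lagrange (f := f) (x₀ := 0) (n := N)
      hx0.ne (by rw [Set.uIcc_of_le hx0.le]; exact hcont N)
      (by rw [Set.uIcc_of_le hx0.le, Set.uIoo_of_le hx0.le]; exact hdiff N)
    rw [Set.uIoo_of_le hx0.le] at hξ
    rw [Set.uIcc_of_le hx0.le] at hrem
    have hT : taylorWithinEval f N (Icc 0 x) 0 x = ∑ k ∈ Finset.range (N + 1), c k := by
      rw [taylor_within_apply]
      refine Finset.sum_congr rfl fun k hk => ?_
      rw [hiter k 0 (mem_Icc.mpr ⟨le_rfl, hx0.le⟩)]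
      have hs0 : sfg k 0 = shiftedFactorial (1/2) k := by
        rw [sfg, sub_zero, Real.one_rpow, mul_one]
      rw [hs0, smul_eq_mul, sub_zero]
      simp only [hc]
      ring
    have hfx : f x = C := rfl
    rw [hT, hfx] at hrem
    rw [abs_sub_comm, hrem]
    -- now bound the remainder
    have hξ1 : (0:ℝ) < 1 - ξ := by have := hξ.2; linarith
    have hξx : 1 - x ≤ 1 - ξ := by have := hξ.2; linarith
    have hiterξ : iteratedDerivWithin (N + 1) f (Icc 0 x) ξ = sfg (N + 1) ξ :=
      hiter (N + 1) ξ (Ioo_subset_Icc_self hξ)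
    rw [hiterξ]
    have hpow : (1 - ξ) ^ (-(1/2 : ℝ) - (N + 1 : ℕ)) ≤ (1 - x) ^ (-(1/2 : ℝ) - (N + 1 : ℕ)) :=
      Real.rpow_le_rpow_of_nonpos h1x hξx (by
        have : (0:ℝ) ≤ ((N + 1 : ℕ) : ℝ) := Nat.cast_nonneg _
        linarith)
    have hsplit : (1 - x) ^ (-(1/2 : ℝ) - (N + 1 : ℕ)) = C * ((1 - x) ^ (N + 1))⁻¹ := by
      rw [show (-(1/2 : ℝ) - (N + 1 : ℕ)) = -(1/2 : ℝ) + (-(N + 1 : ℕ) : ℝ) by push_cast; ring,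
        Real.rpow_add h1x, hC]
      congr 1
      rw [← Real.rpow_natCast (1 - x) (N + 1), ← Real.rpow_neg h1x.le]
    have hsfgξ : 0 ≤ sfg (N + 1) ξ := mul_nonneg (sf_nonneg _) (Real.rpow_nonneg hξ1.le _)
    have hfpos : (0:ℝ) < ((N + 1).factorial : ℝ) := by positivity
    rw [abs_of_nonneg (div_nonneg (mul_nonneg hsfgξ (pow_nonneg (by linarith) _)) hfpos.le)]
    have hstep : sfg (N + 1) ξ ≤ ((N + 1).factorial : ℝ) * (C * ((1 - x) ^ (N + 1))⁻¹) := by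
      calc sfg (N + 1) ξ
          ≤ shiftedFactorial (1/2) (N + 1) * ((1 - x) ^ (-(1/2 : ℝ) - ((N + 1 : ℕ) : ℝ))) :=
            mul_le_mul_of_nonneg_left hpow (sf_nonneg _)
        _ = shiftedFactorial (1/2) (N + 1) * (C * ((1 - x) ^ (N + 1))⁻¹) := by rw [hsplit]
        _ ≤ ((N + 1).factorial : ℝ) * (C * ((1 - x) ^ (N + 1))⁻¹) :=
            mul_le_mul_of_nonneg_right (sf_le_factorial _) (by positivity)
    calc sfg (N + 1) ξ * (x - 0) ^ (N + 1) / ((N + 1).factorial : ℝ)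
        ≤ (((N + 1).factorial : ℝ) * (C * ((1 - x) ^ (N + 1))⁻¹)) * (x - 0) ^ (N + 1) /
            ((N + 1).factorial : ℝ) := by
          exact (div_le_div_iff_of_pos_right hfpos).2 (mul_le_mul_of_nonneg_right hstep (pow_nonneg (by linarith) _))
      _ = C * r ^ (N + 1) := by
          have hP : ((1 - x) ^ (N + 1) : ℝ) ≠ 0 := pow_ne_zero _ h1x.ne'
          rw [sub_zero, hr, div_pow]
          field_simp
  -- conclude via squeeze
  have htend0 : Tendsto (fun N : ℕ => C * r ^ (N + 1)) atTop (nhds 0) := by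
    have h := (tendsto_pow_atTop_nhds_zero_of_lt_one hr0 hr1).const_mul C
    rw [mul_zero] at h
    exact h.comp (tendsto_add_atTop_nat 1)
  refine (hasSum_iff_tendsto_nat_of_nonneg hcn _).2 ?_
  have h2 : Tendsto (fun N : ℕ => ∑ k ∈ Finset.range (N + 1), c k) atTop (nhds C) := by
    rw [tendsto_iff_norm_sub_tendsto_zero]
    exact squeeze_zero (fun N => norm_nonneg _)
      (fun N => by simpa [Real.norm_eq_abs] using hbound N) htend0
  exact (tendsto_add_atTop_iff_nat 1).1 h2

theorem sqrt_series_1F0_pos (p m n : ℕ) (hp : 0 < p) (hps : ¬ IsSquare p)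
    (hm : 0 < m) (hn : 0 < n) (hpell : (n : ℤ) ^ 2 - p * m ^ 2 = 1) :
    Summable (fun k : ℕ => shiftedFactorial (1/2) k / (Nat.factorial k : ℝ) * (1 / (p * m ^ 2 + 1) : ℝ) ^ k) ∧
    Real.sqrt p = (m * p / n : ℝ) *
      ∑' k : ℕ, shiftedFactorial (1/2) k / (Nat.factorial k : ℝ) * (1 / (p * m ^ 2 + 1) : ℝ) ^ k := by
  have hp2 : 2 ≤ p := by
    rcases Nat.lt_or_ge p 2 with h | h
    · have hp1 : p = 1 := by omega
      subst hp1
      exact absurd ⟨1, rfl⟩ hps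
    · exact h
  set x : ℝ := (1 / (p * m ^ 2 + 1) : ℝ) with hxdef
  have hden : (3:ℝ) ≤ (p : ℝ) * (m:ℝ) ^ 2 + 1 := by
    have hm1 : (1:ℝ) ≤ (m:ℝ) := by exact_mod_cast hm
    have hp2' : (2:ℝ) ≤ (p:ℝ) := by exact_mod_cast hp2
    nlinarith
  have hx0 : 0 < x := by rw [hxdef]; positivity
  have hx : x < 1/2 := by
    rw [hxdef, div_lt_div_iff₀ (by linarith) (by norm_num)]
    linarith
  have hsum := key_hasSum hx0 hx
  refine ⟨hsum.summable, ?_⟩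
  rw [hsum.tsum_eq]
  -- now the algebra
  have hnsq : ((n:ℝ)) ^ 2 = (p : ℝ) * (m:ℝ) ^ 2 + 1 := by
    have : ((n:ℤ)) ^ 2 = (p : ℤ) * (m:ℤ) ^ 2 + 1 := by linarith [hpell]
    exact_mod_cast this
  have hn0 : (0:ℝ) < (n:ℝ) := by exact_mod_cast hn
  have hm0 : (0:ℝ) < (m:ℝ) := by exact_mod_cast hm
  have hp0 : (0:ℝ) < (p:ℝ) := by exact_mod_cast hp
  have hsp : (0:ℝ) < Real.sqrt p := Real.sqrt_pos.mpr hp0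
  set A : ℝ := Real.sqrt p * m / n with hA
  have hA0 : 0 < A := by positivity
  have h1x : 1 - x = A ^ 2 := by
    rw [hA, div_pow, mul_pow, Real.sq_sqrt hp0.le, hxdef, hnsq]
    field_simp
    ring
  have hpowA : (1 - x) ^ (-(1/2 : ℝ)) = A⁻¹ := by
    rw [h1x, ← Real.rpow_natCast A 2, ← Real.rpow_mul hA0.le]
    norm_num
    rw [Real.rpow_neg_one]
  rw [hpowA, hA]
  field_simp
  nlinarith [Real.sq_sqrt hp0.le, hsp, hm0, hn0]
end

section
/- Let p be a positive nonsquare integer and let m, n be positive integers satisfying n² − p·m² = 1. Then √p = (m·p/n) · Σ_{k=0}^{∞} ((1/4)_k (3/4)_k / (k! (3/2)_k)) · (4·p·m²/(p·m² + 1)²)^k, where the series on the right converges. -/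
open Finset
set_option maxHeartbeats 1000000

lemma catalan_le_four_pow (j : ℕ) : (catalan j : ℝ) ≤ 4 ^ j := by
  have h2 : j.centralBinom ≤ 4 ^ j := by
    calc j.centralBinom = (2 * j).choose j := rfl
    _ ≤ ∑ i ∈ range (2 * j + 1), (2 * j).choose i :=
        Finset.single_le_sum (fun i _ => Nat.zero_le _) (by
          simp [Finset.mem_range]; omega)
    _ = 2 ^ (2 * j) := Nat.sum_range_choose (2 * j)
    _ = 4 ^ j := by rw [pow_mul]; norm_num
  have h3 : catalan j ≤ 4 ^ j := by
    have h1 : (j + 1) * catalan j = j.centralBinom := succ_mul_catalan_eq_centralBinom j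
    nlinarith
  exact_mod_cast h3

lemma summable_norm_cat {y : ℝ} (hy : |y| < 1/4) :
    Summable (fun j : ℕ => ‖(catalan j : ℝ) * y ^ j‖) := by
  have hg : Summable (fun j : ℕ => (4 * |y|) ^ j) :=
    summable_geometric_of_lt_one (by positivity) (by linarith)
  apply hg.of_nonneg_of_le (fun _ => norm_nonneg _) (fun j => ?_)
  rw [norm_mul, norm_pow, mul_pow, Real.norm_natCast, Real.norm_eq_abs]
  gcongr
  exact catalan_le_four_pow j

noncomputable def catGF (y : ℝ) : ℝ := ∑' j : ℕ, (catalan j : ℝ) * y ^ j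

lemma summable_cat {y : ℝ} (hy : |y| < 1/4) :
    Summable (fun j : ℕ => (catalan j : ℝ) * y ^ j) :=
  (summable_norm_cat hy).of_norm

lemma catGF_zero : catGF 0 = 1 := by
  unfold catGF
  rw [tsum_eq_single 0 (fun j hj => by simp [zero_pow hj])]
  simp

lemma catGF_funceq {y : ℝ} (hy : |y| < 1/4) : y * catGF y ^ 2 = catGF y - 1 := by
  have hn := summable_norm_cat hy
  have hs := summable_cat hy
  have h1 : catGF y * catGF y =
      ∑' j : ℕ, ∑ kl ∈ antidiagonal j, ((catalan kl.1 : ℝ) * y ^ kl.1) * ((catalan kl.2 : ℝ) * y ^ kl.2) :=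
    tsum_mul_tsum_eq_tsum_sum_antidiagonal_of_summable_norm hn hn
  have h2 : ∀ j : ℕ, ∑ kl ∈ antidiagonal j, ((catalan kl.1 : ℝ) * y ^ kl.1) * ((catalan kl.2 : ℝ) * y ^ kl.2)
      = (catalan (j+1) : ℝ) * y ^ j := by
    intro j
    rw [catalan_succ' j]
    push_cast
    rw [Finset.sum_mul]
    apply Finset.sum_congr rfl
    intro kl hkl
    rw [Finset.HasAntidiagonal.mem_antidiagonal] at hkl
    rw [← hkl, pow_add]
    ring
  have h3 : y * catGF y ^ 2 = ∑' j : ℕ, (catalan (j+1) : ℝ) * y ^ (j+1) := by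
    rw [sq, h1]
    simp_rw [h2]
    rw [← tsum_mul_left]
    congr 1
    ext j
    ring
  have h4 : Summable (fun j : ℕ => (catalan (j+1) : ℝ) * y ^ (j+1)) :=
    (summable_nat_add_iff 1).mpr hs
  have h5 : catGF y = (catalan 0 : ℝ) * y ^ 0 + ∑' j : ℕ, (catalan (j+1) : ℝ) * y ^ (j+1) := by
    unfold catGF
    exact Summable.tsum_eq_zero_add hs
  rw [h3]
  rw [h5]
  simp

lemma catGF_contOn {r : ℝ} (hr0 : 0 ≤ r) (hr : r < 1/4) :
    ContinuousOn catGF (Set.Icc (-r) r) := by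
  apply continuousOn_tsum (u := fun j => (4*r)^j)
  · intro j
    exact (continuous_const.mul (continuous_pow j)).continuousOn
  · exact summable_geometric_of_lt_one (by positivity) (by linarith)
  · intro j x hx
    rw [norm_mul, norm_pow, Real.norm_natCast, Real.norm_eq_abs, mul_pow]
    gcongr
    · exact catalan_le_four_pow j
    · rw [abs_le]; exact ⟨hx.1, hx.2⟩

lemma catGF_key {y : ℝ} (hy : |y| < 1/4) :
    2 * y * catGF y - 1 = - Real.sqrt (1 - 4 * y) := by
  set g : ℝ → ℝ := fun t => 2 * t * catGF t - 1 with hg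
  have habs : ∀ t : ℝ, t ∈ Set.Icc (-|y|) (|y|) → |t| < 1/4 := by
    intro t ht
    rw [abs_lt]; constructor <;> [linarith [ht.1]; linarith [ht.2]]
  have hsq : ∀ t : ℝ, |t| < 1/4 → (g t) ^ 2 = 1 - 4 * t := by
    intro t ht
    have := catGF_funceq ht
    simp only [hg]
    nlinarith [this]
  have hcont : ContinuousOn g (Set.Icc (-|y|) (|y|)) := by
    apply ContinuousOn.sub
    · exact (continuous_const.mul continuous_id).continuousOn.mul (catGF_contOn (abs_nonneg y) hy)
    · exact continuousOn_const
  have hg0 : g 0 = -1 := by simp [hg, catGF_zero]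
  have hyneg : g y < 0 := by
    by_contra hpos
    push_neg at hpos
    have hy2 : (g y)^2 = 1 - 4*y := hsq y hy
    have hgy : 0 < g y := by
      rcases lt_or_eq_of_le hpos with h | h
      · exact h
      · exfalso
        have : (0:ℝ) < 1 - 4*y := by have := abs_lt.mp hy; linarith [this.1, this.2]
        rw [← h] at hy2; simp at hy2; linarith
    -- IVT on uIcc 0 y
    have hsub : Set.uIcc (0:ℝ) y ⊆ Set.Icc (-|y|) (|y|) := by
      intro t ht
      rw [Set.mem_uIcc] at ht
      constructor <;> rcases ht with ⟨a,b⟩|⟨a,b⟩ <;> cases abs_cases y <;> linarith [abs_nonneg y]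
    have hivt := intermediate_value_uIcc (hcont.mono hsub)
    have h0mem : (0:ℝ) ∈ Set.uIcc (g 0) (g y) := by
      rw [hg0, Set.mem_uIcc]; left; constructor <;> linarith
    obtain ⟨t, ht, hgt⟩ := hivt h0mem
    have htlt : |t| < 1/4 := habs t (hsub ht)
    have : (0:ℝ) = 1 - 4*t := by rw [← hsq t htlt, hgt]; ring
    have := abs_lt.mp htlt
    linarith
  have hy2 : (g y)^2 = 1 - 4*y := hsq y hy
  have : Real.sqrt (1 - 4*y) = - g y := by
    rw [← hy2, Real.sqrt_sq_eq_abs, abs_of_nonpos (le_of_lt hyneg)]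
  rw [this]
  simp [hg]

lemma catGF_even_part {y : ℝ} (hy : |y| < 1/4) :
    HasSum (fun k : ℕ => (catalan (2*k) : ℝ) * y ^ (2*k)) ((catGF y + catGF (-y)) / 2) := by
  have hy' : |(-y)| < 1/4 := by rwa [abs_neg]
  have h1 : HasSum (fun j : ℕ => (catalan j : ℝ) * y ^ j + (catalan j : ℝ) * (-y) ^ j)
      (catGF y + catGF (-y)) :=
    (summable_cat hy).hasSum.add (summable_cat hy').hasSum
  set F : ℕ → ℝ := fun j => (catalan j : ℝ) * y ^ j + (catalan j : ℝ) * (-y) ^ j with hF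
  set G : ℕ → ℝ := fun k => 2 * ((catalan (2*k) : ℝ) * y ^ (2*k)) with hG
  have hodd : ∀ j : ℕ, Odd j → F j = 0 := by
    intro j hj
    simp only [hF]
    rw [Odd.neg_pow hj]
    ring
  have hFG : ∀ k : ℕ, F (2*k) = G k := by
    intro k
    simp only [hF, hG]
    rw [Even.neg_pow ⟨k, by ring⟩]
    ring
  have h2 : HasSum G (catGF y + catGF (-y)) := by
    rw [← hasSum_iff_hasSum_of_ne_zero_bij (f := F)
      (fun x : Function.support G => 2 * (x : ℕ)) ?_ ?_ ?_]
    · exact h1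
    · intro a b hab
      have : 2 * (a : ℕ) = 2 * (b : ℕ) := hab
      exact Subtype.ext (by omega)
    · intro j hj
      rcases Nat.even_or_odd j with ⟨k, hk⟩ | hodd'
      · have hjk : j = 2 * k := by omega
        refine ⟨⟨k, ?_⟩, hjk.symm⟩
        rw [Function.mem_support] at hj ⊢
        rw [hjk, hFG k] at hj
        exact hj
      · exact absurd (hodd j hodd') (Function.mem_support.mp hj)
    · intro x
      exact hFG x
  have h3 := h2.div_const 2
  convert h3 using 2 with k
  rfl
  simp only [hG]
  ring

lemma sf_succ (x : ℝ) (k : ℕ) :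
    shiftedFactorial x (k+1) = shiftedFactorial x k * (x + k) :=
  Finset.prod_range_succ _ _

lemma sf_pos {x : ℝ} (hx : 0 < x) (k : ℕ) : 0 < shiftedFactorial x k :=
  Finset.prod_pos fun i _ => by positivity

lemma catalan_two_step (k : ℕ) :
    (2*(k:ℝ)+2) * (2*k+1) * (2*k+3) * (catalan (2*k+2) : ℝ)
      = 4 * (4*k+3) * (4*k+1) * (2*k+1) * (catalan (2*k) : ℝ) := by
  have A : ((2*k+1 : ℕ) : ℝ) * (catalan (2*k) : ℝ) = ((2*k).centralBinom : ℝ) := by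
    exact_mod_cast congrArg (Nat.cast : ℕ → ℝ) (succ_mul_catalan_eq_centralBinom (2*k))
  have B : ((2*k+3 : ℕ) : ℝ) * (catalan (2*k+2) : ℝ) = ((2*k+2).centralBinom : ℝ) := by
    exact_mod_cast congrArg (Nat.cast : ℕ → ℝ) (succ_mul_catalan_eq_centralBinom (2*k+2))
  have C : ((2*k+2 : ℕ) : ℝ) * ((2*k+2).centralBinom : ℝ)
      = 2 * (2*(2*(k:ℝ)+1)+1) * ((2*k+1).centralBinom : ℝ) := by
    have := congrArg (Nat.cast : ℕ → ℝ) (Nat.succ_mul_centralBinom_succ (2*k+1))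
    push_cast at this ⊢
    linarith
  have D : ((2*k+1 : ℕ) : ℝ) * ((2*k+1).centralBinom : ℝ)
      = 2 * (2*(2*(k:ℝ))+1) * ((2*k).centralBinom : ℝ) := by
    have := congrArg (Nat.cast : ℕ → ℝ) (Nat.succ_mul_centralBinom_succ (2*k))
    push_cast at this ⊢
    linarith
  push_cast at A B C D
  linear_combination ((2*(k:ℝ)+1)*(2*k+2))*B + (2*(k:ℝ)+1)*C + 2*(4*(k:ℝ)+3)*D - 4*(4*(k:ℝ)+3)*(4*(k:ℝ)+1)*A

lemma coeff_eq_catalan (k : ℕ) :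
    shiftedFactorial (1/4) k * shiftedFactorial (3/4) k
      / ((Nat.factorial k : ℝ) * shiftedFactorial (3/2) k)
    = (catalan (2*k) : ℝ) / 16 ^ k := by
  induction k with
  | zero => simp [shiftedFactorial]
  | succ k ih =>
    have hfac : (Nat.factorial k : ℝ) ≠ 0 := by positivity
    have hsf : shiftedFactorial (3/2) k ≠ 0 := ne_of_gt (sf_pos (by norm_num) k)
    have h16 : (16:ℝ)^k ≠ 0 := by positivity
    have hkey := catalan_two_step k
    have h2 : (2*(k+1) : ℕ) = 2*k+2 := by ring
    rw [sf_succ, sf_succ, sf_succ, Nat.factorial_succ, h2]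
    push_cast
    rw [div_eq_div_iff (by positivity) (by positivity)]
    rw [div_eq_div_iff (by positivity) (by positivity)] at ih
    push_cast at ih
    have hc2 : ((k:ℝ)+1)*(3/2+(k:ℝ))*(catalan (2*k+2):ℝ)
        = (4*(k:ℝ)+1)*(4*(k:ℝ)+3)*(catalan (2*k):ℝ) := by
      have h4 : (4*(2*(k:ℝ)+1)) ≠ 0 := by positivity
      apply mul_left_cancel₀ h4
      linear_combination hkey
    linear_combination (16*(1/4+(k:ℝ))*(3/4+(k:ℝ)))*ih
      - ((k.factorial:ℝ) * shiftedFactorial (3/2) k)*hc2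

theorem sqrt_series_2F1_pos (p m n : ℕ) (hp : 0 < p) (hps : ¬ IsSquare p)
    (hm : 0 < m) (hn : 0 < n) (hpell : (n : ℤ) ^ 2 - p * m ^ 2 = 1) :
    Summable (fun k : ℕ => shiftedFactorial (1/4) k * shiftedFactorial (3/4) k / ((Nat.factorial k : ℝ) * shiftedFactorial (3/2) k) * (4 * p * m ^ 2 / (p * m ^ 2 + 1) ^ 2 : ℝ) ^ k) ∧
    Real.sqrt p = (m * p / n : ℝ) *
      ∑' k : ℕ, shiftedFactorial (1/4) k * shiftedFactorial (3/4) k / ((Nat.factorial k : ℝ) * shiftedFactorial (3/2) k) * (4 * p * m ^ 2 / (p * m ^ 2 + 1) ^ 2 : ℝ) ^ k := by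
  -- basic facts
  have hp2 : 2 ≤ p := by
    rcases p with _ | _ | p
    · omega
    · exact absurd ⟨1, rfl⟩ hps
    · omega
  set t : ℝ := (p : ℝ) * (m : ℝ) ^ 2 with hT
  have hm1 : (1:ℝ) ≤ (m:ℝ) := by exact_mod_cast hm
  have ht2 : (2:ℝ) ≤ t := by
    have : (2:ℝ) ≤ (p:ℝ) := by exact_mod_cast hp2
    nlinarith
  have hn2 : ((n:ℝ))^2 = t + 1 := by
    have : ((n:ℤ))^2 = (p:ℤ) * (m:ℤ)^2 + 1 := by linarith [hpell]
    have := congrArg (Int.cast : ℤ → ℝ) this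
    push_cast at this
    rw [hT]; linarith
  have hnpos : (0:ℝ) < n := by exact_mod_cast hn
  set s : ℝ := Real.sqrt t with hS
  have hs2 : s ^ 2 = t := Real.sq_sqrt (by linarith)
  have hs1 : 1 < s := by nlinarith [Real.sqrt_nonneg t]
  set y : ℝ := s / (2 * (t + 1)) with hY
  have hypos : 0 < y := by
    apply div_pos (by linarith) (by linarith)
  have hy : |y| < 1/4 := by
    rw [abs_of_pos hypos, hY, div_lt_iff₀ (by linarith)]
    nlinarith [sq_nonneg (s - 1)]
  have hyneg : |(-y)| < 1/4 := by rwa [abs_neg]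
  -- the ratio
  have hz : (4 * (p:ℝ) * (m:ℝ) ^ 2 / ((p:ℝ) * (m:ℝ) ^ 2 + 1) ^ 2 : ℝ) = 4 * t / (t+1)^2 := by
    rw [hT]; ring
  have hterm : ∀ k : ℕ,
      shiftedFactorial (1/4) k * shiftedFactorial (3/4) k / ((Nat.factorial k : ℝ) * shiftedFactorial (3/2) k) * (4 * (p:ℝ) * (m:ℝ) ^ 2 / ((p:ℝ) * (m:ℝ) ^ 2 + 1) ^ 2 : ℝ) ^ k
      = (catalan (2*k) : ℝ) * y ^ (2*k) := by
    intro k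
    rw [coeff_eq_catalan, hz]
    have h1 : 4 * t / (t+1)^2 = 16 * y^2 := by
      rw [hY]
      field_simp
      nlinarith [hs2]
    rw [h1, mul_pow, pow_mul]
    have h16 : (16:ℝ)^k ≠ 0 := by positivity
    field_simp
  have hsum : HasSum (fun k : ℕ => (catalan (2*k) : ℝ) * y ^ (2*k))
      ((catGF y + catGF (-y)) / 2) := catGF_even_part hy
  have hsum' : HasSum (fun k : ℕ =>
      shiftedFactorial (1/4) k * shiftedFactorial (3/4) k / ((Nat.factorial k : ℝ) * shiftedFactorial (3/2) k) * (4 * (p:ℝ) * (m:ℝ) ^ 2 / ((p:ℝ) * (m:ℝ) ^ 2 + 1) ^ 2 : ℝ) ^ k)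
      ((catGF y + catGF (-y)) / 2) := by
    convert hsum using 2 with k
    exact hterm k
  refine ⟨hsum'.summable, ?_⟩
  rw [hsum'.tsum_eq]
  -- evaluate catGF y + catGF (-y)
  have hkey1 := catGF_key hy
  have hkey2 := catGF_key hyneg
  have hsq1 : Real.sqrt (1 - 4 * y) = (s - 1) / n := by
    rw [show 1 - 4 * y = ((s - 1)/n)^2 by
      rw [hY, div_pow]
      rw [hn2]
      field_simp
      nlinarith [hs2]]
    exact Real.sqrt_sq (div_nonneg (by linarith) (le_of_lt hnpos))
  have hsq2 : Real.sqrt (1 - 4 * (-y)) = (s + 1) / n := by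
    rw [show 1 - 4 * (-y) = ((s + 1)/n)^2 by
      rw [hY, div_pow]
      rw [hn2]
      field_simp
      nlinarith [hs2]]
    exact Real.sqrt_sq (by positivity)
  rw [hsq1] at hkey1
  rw [hsq2] at hkey2
  have hF : catGF y + catGF (-y) = 2 * (n / s) := by
    have h1 : 2 * y * (catGF y + catGF (-y)) = (s+1)/n - (s-1)/n := by
      linarith [hkey1, hkey2]
    have h2 : (s+1)/n - (s-1)/n = 2/n := by
      field_simp
      ring
    rw [h2] at h1
    have hy0 : (2 * y) ≠ 0 := ne_of_gt (by positivity)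
    apply mul_left_cancel₀ hy0
    rw [h1, hY]
    have hs0 : s ≠ 0 := by positivity
    have hn0 : (n:ℝ) ≠ 0 := ne_of_gt hnpos
    have ht0 : t + 1 ≠ 0 := by linarith
    field_simp
    linear_combination (-1) * hn2 + (-1) * hT
  rw [hF]
  -- final: sqrt p = (m*p/n) * (n/s)
  have hqm : s = Real.sqrt p * m := by
    rw [hS, hT, show (p:ℝ) * (m:ℝ)^2 = ((p:ℝ)) * ((m:ℝ))^2 by ring,
      Real.sqrt_mul (by positivity), Real.sqrt_sq (by positivity)]
  have hq2 : Real.sqrt p ^ 2 = (p:ℝ) := Real.sq_sqrt (by positivity)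
  have hqpos : 0 < Real.sqrt p := Real.sqrt_pos.mpr (by exact_mod_cast hp)
  rw [hqm]
  have hq0 : Real.sqrt p ≠ 0 := ne_of_gt hqpos
  have hm0 : (m:ℝ) ≠ 0 := by positivity
  have hn0 : (n:ℝ) ≠ 0 := ne_of_gt hnpos
  field_simp
  linear_combination hq2
end

section
/- Let p be a positive nonsquare integer and let m, n be positive integers satisfying n² − p·m² = 1 and 4·(p·m² + 1)³ > 27·p²·m⁴. Then √p = (m·p/n) · Σ_{k=0}^{∞} ((1/2)_k (1/6)_k (5/6)_k / (k! (3/4)_k (5/4)_k)) · (27·p²·m⁴/(4·(p·m² + 1)³))^k, where the series on the right converges. -/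
open Finset Polynomial

/-- Fuss–Catalan polynomial: `AP 0 = 1`, `AP k = X * ∏_{i<k-1}(X+2k+1+i) / k!`. -/
noncomputable def AP : ℕ → Polynomial ℝ
  | 0 => 1
  | (k+1) => Polynomial.C ((Nat.factorial (k+1) : ℝ))⁻¹ *
      (Polynomial.X * ∏ i ∈ Finset.range k, (Polynomial.X + Polynomial.C (2*(k+1)+1+i : ℝ)))

noncomputable def A (k : ℕ) (x : ℝ) : ℝ := (AP k).eval x

lemma A_zero (x : ℝ) : A 0 x = 1 := by simp [A, AP]

lemma A_succ (k : ℕ) (x : ℝ) :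
    A (k+1) x = ((Nat.factorial (k+1) : ℝ))⁻¹ *
      (x * ∏ i ∈ Finset.range k, (x + (2*(k+1)+1+i : ℝ))) := by
  simp [A, AP, Polynomial.eval_prod]

lemma A_one (x : ℝ) : A 1 x = x := by simp [A_succ]

lemma A_succ_zero (k : ℕ) : A (k+1) 0 = 0 := by simp [A_succ]

lemma A_nonneg (k : ℕ) {x : ℝ} (hx : 0 ≤ x) : 0 ≤ A k x := by
  cases k with
  | zero => simp [A_zero]
  | succ k =>
    rw [A_succ]
    have h1 : (0:ℝ) ≤ ∏ i ∈ Finset.range k, (x + (2*(k+1)+1+i : ℝ)) := by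
      apply Finset.prod_nonneg
      intro i _
      positivity
    positivity

lemma A_mono (k : ℕ) {x y : ℝ} (hx : 0 ≤ x) (hxy : x ≤ y) : A k x ≤ A k y := by
  cases k with
  | zero => simp [A_zero]
  | succ k =>
    rw [A_succ, A_succ]
    apply mul_le_mul_of_nonneg_left _ (by positivity)
    apply mul_le_mul hxy _ (Finset.prod_nonneg fun i _ => by positivity) (le_trans hx hxy)
    apply Finset.prod_le_prod (fun i _ => by positivity) (fun i _ => by linarith)

/-- rising product `a(a+1)...(a+n-1)` -/
noncomputable def pp (a : ℝ) (n : ℕ) : ℝ := ∏ i ∈ Finset.range n, (a + i)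

lemma pp_zero (a : ℝ) : pp a 0 = 1 := by simp [pp]

lemma pp_succ (a : ℝ) (n : ℕ) : pp a (n+1) = pp a n * (a + n) := Finset.prod_range_succ _ _

lemma pp_succ' (a : ℝ) (n : ℕ) : pp a (n+1) = a * pp (a+1) n := by
  rw [pp, Finset.prod_range_succ']
  simp only [Nat.cast_add, Nat.cast_ofNat, Nat.cast_zero, add_zero, Nat.cast_one]
  rw [mul_comm]
  congr 1
  apply Finset.prod_congr rfl
  intro i _
  push_cast
  ring

lemma pp_nonneg {a : ℝ} (ha : 0 ≤ a) (n : ℕ) : 0 ≤ pp a n :=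
  Finset.prod_nonneg fun i _ => by positivity

lemma pp_pos {a : ℝ} (ha : 0 < a) (n : ℕ) : 0 < pp a n :=
  Finset.prod_pos fun i _ => by positivity

lemma A_succ' (k : ℕ) (x : ℝ) :
    A (k+1) x = ((Nat.factorial (k+1) : ℝ))⁻¹ * (x * pp (x + (2*k+3)) k) := by
  rw [A_succ, pp]
  congr 1
  congr 1
  apply Finset.prod_congr rfl
  intro i _
  push_cast
  ring

lemma fact_ne (k : ℕ) : (Nat.factorial k : ℝ) ≠ 0 := by
  exact_mod_cast (Nat.factorial_pos k).ne'

lemma pp_congr {a b : ℝ} (h : a = b) (n : ℕ) : pp a n = pp b n := by rw [h]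

lemma A_rec (k : ℕ) (x : ℝ) : A (k+1) x = A (k+1) (x-1) + A k (x+2) := by
  cases k with
  | zero => simp [A_one, A_zero]
  | succ j =>
    rw [A_succ', A_succ', A_succ']
    rw [show ((Nat.factorial (j+1+1):ℝ)) = ((j:ℝ)+2) * (Nat.factorial (j+1):ℝ) from by
      rw [Nat.factorial_succ]; push_cast; ring]
    push_cast
    have e1 : pp (x + (2*((j:ℝ)+1)+3)) (j+1) = pp (x + (2*(j:ℝ)+5)) j * (x + (2*(j:ℝ)+5) + j) := by
      rw [pp_congr (show x + (2*((j:ℝ)+1)+3) = x + (2*(j:ℝ)+5) from by ring), pp_succ]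
    have e2 : pp (x - 1 + (2*((j:ℝ)+1)+3)) (j+1) = (x + (2*(j:ℝ)+4)) * pp (x + (2*(j:ℝ)+5)) j := by
      rw [pp_congr (show x - 1 + (2*((j:ℝ)+1)+3) = x + (2*(j:ℝ)+4) from by ring), pp_succ',
        pp_congr (show x + (2*(j:ℝ)+4) + 1 = x + (2*(j:ℝ)+5) from by ring)]
    have e3 : pp (x + 2 + (2*(j:ℝ)+3)) j = pp (x + (2*(j:ℝ)+5)) j :=
      pp_congr (by ring) j
    rw [e1, e2, e3]
    have h2 : (Nat.factorial (j+1) : ℝ) ≠ 0 := fact_ne _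
    have h3 : ((j:ℝ)+2) ≠ 0 := by positivity
    field_simp
    ring

lemma A_conv : ∀ (j : ℕ) (x y : ℝ),
    ∑ k ∈ Finset.range (j+1), A k x * A (j-k) y = A j (x+y) := by
  intro j
  induction j with
  | zero => intro x y; simp [A_zero]
  | succ jj IH =>
    intro x y
    set Q : Polynomial ℝ :=
      (∑ k ∈ Finset.range (jj+2), AP k * Polynomial.C (A (jj+1-k) y)) -
        (AP (jj+1)).comp (Polynomial.X + Polynomial.C y) with hQ
    have hev : ∀ t : ℝ, Q.eval t =
        (∑ k ∈ Finset.range (jj+2), A k t * A (jj+1-k) y) - A (jj+1) (t+y) := by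
      intro t
      simp [hQ, Polynomial.eval_finset_sum, A]
    have hper : ∀ t : ℝ, Q.eval t = Q.eval (t-1) := by
      intro t
      rw [hev, hev]
      have hs : ∑ k ∈ Finset.range (jj+2), A k t * A (jj+1-k) y
          - ∑ k ∈ Finset.range (jj+2), A k (t-1) * A (jj+1-k) y
          = A jj (t+2+y) := by
        rw [← Finset.sum_sub_distrib]
        have : ∀ k ∈ Finset.range (jj+2),
            A k t * A (jj+1-k) y - A k (t-1) * A (jj+1-k) y
            = (A k t - A k (t-1)) * A (jj+1-k) y := by intro k _; ring
        rw [Finset.sum_congr rfl this, Finset.sum_range_succ']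
        have h0 : (A 0 t - A 0 (t-1)) * A (jj+1-0) y = 0 := by simp [A_zero]
        rw [h0, add_zero]
        have : ∀ k ∈ Finset.range (jj+1),
            (A (k+1) t - A (k+1) (t-1)) * A (jj+1-(k+1)) y
            = A k (t+2) * A (jj-k) y := by
          intro k _
          rw [Nat.succ_sub_succ]
          have := A_rec k t
          have h2 : A (k+1) t - A (k+1) (t-1) = A k (t+2) := by linarith
          rw [h2]
        rw [Finset.sum_congr rfl this, IH (t+2) y]
      have hA : A (jj+1) (t+y) - A (jj+1) (t-1+y) = A jj (t+2+y) := by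
        have := A_rec jj (t+y)
        have h1 : t + y - 1 = t - 1 + y := by ring
        have h2 : t + y + 2 = t + 2 + y := by ring
        rw [h1, h2] at this
        linarith
      linarith
    have hper' : ∀ mm : ℕ, Q.eval (mm : ℝ) = Q.eval 0 := by
      intro mm
      induction mm with
      | zero => norm_num
      | succ i ih =>
        have := hper ((i:ℝ)+1)
        push_cast
        rw [this]
        simpa using ih
    have h0 : Q.eval 0 = 0 := by
      rw [hev]
      rw [Finset.sum_range_succ']
      simp [A_zero, A_succ_zero]
    have hQ0 : Q = 0 := by
      apply Polynomial.eq_zero_of_infinite_isRoot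
      apply Set.Infinite.mono (s := Set.range (fun mm : ℕ => (mm : ℝ)))
      · rintro t ⟨mm, rfl⟩
        simp only [Set.mem_setOf_eq, Polynomial.IsRoot]
        rw [hper' mm, h0]
      · exact Set.infinite_range_of_injective Nat.cast_injective
    have := hev x
    rw [hQ0] at this
    simp at this
    linarith

lemma pp_flip (a : ℝ) (n : ℕ) :
    a * (a+1) * pp (a+2) (n+1) = pp a n * ((a+n) * (a+n+1) * (a+n+2)) := by
  have h1 : pp a (n+3) = a * ((a+1) * pp (a+2) (n+1)) := by
    rw [pp_succ' a (n+2), pp_succ' (a+1) (n+1), pp_congr (show a+1+1 = a+2 from by ring)]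
  have h2 : pp a (n+3) = pp a n * ((a+n) * (a+n+1) * (a+n+2)) := by
    rw [pp_succ a (n+2), pp_succ a (n+1), pp_succ a n]
    push_cast
    ring
  rw [← mul_assoc] at h1
  linarith

lemma A13 (k : ℕ) : A k 3 = A (k+1) 1 := by
  cases k with
  | zero => simp [A_zero, A_one]
  | succ j =>
    rw [A_succ', A_succ']
    rw [show ((Nat.factorial (j+1+1):ℝ)) = ((j:ℝ)+2) * (Nat.factorial (j+1):ℝ) from by
      rw [Nat.factorial_succ]; push_cast; ring]
    push_cast
    rw [pp_congr (show (3:ℝ) + (2*(j:ℝ)+3) = 2*(j:ℝ)+6 from by ring),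
        pp_congr (show (1:ℝ) + (2*((j:ℝ)+1)+3) = 2*(j:ℝ)+6 from by ring),
        pp_succ]
    have h2 : (Nat.factorial (j+1) : ℝ) ≠ 0 := fact_ne _
    have h3 : ((j:ℝ)+2) ≠ 0 := by positivity
    field_simp
    ring

lemma ratio1 (k : ℕ) :
    ((k:ℝ)+1) * (2*k+2) * (2*k+3) * A (k+1) 1 = (3*k+1) * (3*k+2) * (3*k+3) * A k 1 := by
  cases k with
  | zero => simp [A_zero, A_one]
  | succ j =>
    rw [A_succ', A_succ']
    rw [show ((Nat.factorial (j+1+1):ℝ)) = ((j:ℝ)+2) * (Nat.factorial (j+1):ℝ) from by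
      rw [Nat.factorial_succ]; push_cast; ring]
    push_cast
    rw [pp_congr (show (1:ℝ) + (2*((j:ℝ)+1)+3) = (2*(j:ℝ)+4)+2 from by ring),
        pp_congr (show (1:ℝ) + (2*(j:ℝ)+3) = 2*(j:ℝ)+4 from by ring)]
    have key := pp_flip (2*(j:ℝ)+4) j
    set N := pp (2*(j:ℝ)+4+2) (j+1) with hN
    set D := pp (2*(j:ℝ)+4) j with hD
    have h2 : (Nat.factorial (j+1) : ℝ) ≠ 0 := fact_ne _
    have h3 : ((j:ℝ)+2) ≠ 0 := by positivity
    field_simp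
    linear_combination key

lemma ratio_half (k : ℕ) :
    2 * ((k:ℝ)+1) * (4*k+3) * (4*k+5) * A (k+1) (1/2)
      = (6*k+1) * (6*k+3) * (6*k+5) * A k (1/2) := by
  cases k with
  | zero => simp [A_zero, A_one]; norm_num
  | succ j =>
    rw [A_succ', A_succ']
    rw [show ((Nat.factorial (j+1+1):ℝ)) = ((j:ℝ)+2) * (Nat.factorial (j+1):ℝ) from by
      rw [Nat.factorial_succ]; push_cast; ring]
    push_cast
    rw [pp_congr (show (1:ℝ)/2 + (2*((j:ℝ)+1)+3) = (2*(j:ℝ)+7/2)+2 from by ring),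
        pp_congr (show (1:ℝ)/2 + (2*(j:ℝ)+3) = 2*(j:ℝ)+7/2 from by ring)]
    have key := pp_flip (2*(j:ℝ)+7/2) j
    set N := pp (2*(j:ℝ)+7/2+2) (j+1) with hN
    set D := pp (2*(j:ℝ)+7/2) j with hD
    have h2 : (Nat.factorial (j+1) : ℝ) ≠ 0 := fact_ne _
    have h3 : ((j:ℝ)+2) ≠ 0 := by positivity
    field_simp
    linear_combination 8 * ((j:ℝ)+2) * key

lemma coeff_eq' (k : ℕ) :
    pp (1/2) k * pp (1/6) k * pp (5/6) k * (27/4:ℝ)^k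
      = A k (1/2) * ((Nat.factorial k : ℝ) * pp (3/4) k * pp (5/4) k) := by
  induction k with
  | zero => simp [pp_zero, A_zero]
  | succ k IH =>
    rw [pp_succ, pp_succ, pp_succ, pp_succ, pp_succ, pow_succ]
    rw [show ((Nat.factorial (k+1):ℝ)) = ((k:ℝ)+1) * (Nat.factorial k:ℝ) from by
      rw [Nat.factorial_succ]; push_cast; ring]
    have rh := ratio_half k
    linear_combination (27/4:ℝ)*((1:ℝ)/2+k)*((1:ℝ)/6+k)*((5:ℝ)/6+k) * IH
      - (1/32:ℝ) * pp (3/4) k * pp (5/4) k * (Nat.factorial k : ℝ) * rh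

lemma A1_bound : ∀ k : ℕ, A k 1 ≤ (27/4:ℝ)^k := by
  intro k
  induction k with
  | zero => simp [A_zero]
  | succ k IH =>
    have rh := ratio1 k
    have h1 : (0:ℝ) < ((k:ℝ)+1) * (2*k+2) * (2*k+3) := by positivity
    have hA : 0 ≤ A k 1 := A_nonneg k (by norm_num)
    have h2 : (3*(k:ℝ)+1) * (3*k+2) * (3*k+3) ≤ (27/4) * (((k:ℝ)+1) * (2*k+2) * (2*k+3)) := by
      nlinarith [sq_nonneg ((k:ℝ))]
    have h4 : ((k:ℝ)+1) * (2*k+2) * (2*k+3) * A (k+1) 1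
        ≤ ((k:ℝ)+1) * (2*k+2) * (2*k+3) * (27/4:ℝ)^(k+1) := by
      rw [rh, pow_succ]
      calc (3*(k:ℝ)+1) * (3*k+2) * (3*k+3) * A k 1
          ≤ (3*(k:ℝ)+1) * (3*k+2) * (3*k+3) * (27/4:ℝ)^k :=
            mul_le_mul_of_nonneg_left IH (by positivity)
        _ ≤ (27/4) * (((k:ℝ)+1) * (2*k+2) * (2*k+3)) * (27/4:ℝ)^k :=
            mul_le_mul_of_nonneg_right h2 (by positivity)
        _ = ((k:ℝ)+1) * (2*k+2) * (2*k+3) * ((27/4:ℝ)^k * (27/4)) := by ring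
    exact le_of_mul_le_mul_left h4 h1

lemma A1_step (k : ℕ) : A (k+1) 1 ≤ (27/4) * A k 1 := by
  have rh := ratio1 k
  have h1 : (0:ℝ) < ((k:ℝ)+1) * (2*k+2) * (2*k+3) := by positivity
  have hA : 0 ≤ A k 1 := A_nonneg k (by norm_num)
  nlinarith [sq_nonneg ((k:ℝ)), mul_nonneg (mul_nonneg (by positivity : (0:ℝ) ≤ (k:ℝ)) hA) hA]

lemma A_le_geo {a : ℝ} (ha : 0 ≤ a) (ha3 : a ≤ 3) (k : ℕ) :
    A k a ≤ 7 * (27/4:ℝ)^k := by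
  calc A k a ≤ A k 3 := A_mono k ha ha3
    _ = A (k+1) 1 := A13 k
    _ ≤ (27/4:ℝ)^(k+1) := A1_bound (k+1)
    _ ≤ 7 * (27/4:ℝ)^k := by rw [pow_succ]; nlinarith [pow_nonneg (by norm_num : (0:ℝ) ≤ 27/4) k]

lemma summableA {w : ℝ} (hw0 : 0 ≤ w) (hw : w ≤ 9/64) {a : ℝ} (ha : 0 ≤ a) (ha3 : a ≤ 3) :
    Summable (fun k : ℕ => A k a * w^k) := by
  apply Summable.of_nonneg_of_le
    (fun k => mul_nonneg (A_nonneg k ha) (pow_nonneg hw0 k))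
    (fun k => ?_) (((summable_geometric_of_lt_one (by norm_num) (by norm_num :
      (243/256 : ℝ) < 1))).mul_left 7)
  calc A k a * w^k ≤ (7 * (27/4:ℝ)^k) * w^k :=
        mul_le_mul_of_nonneg_right (A_le_geo ha ha3 k) (pow_nonneg hw0 k)
    _ = 7 * ((27/4) * w)^k := by rw [mul_pow]; ring
    _ ≤ 7 * (243/256:ℝ)^k := by
        apply mul_le_mul_of_nonneg_left _ (by norm_num)
        apply pow_le_pow_left₀ (by positivity)
        linarith

lemma f_mul {w : ℝ} (hw0 : 0 ≤ w) (hw : w ≤ 9/64) {a b : ℝ}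
    (ha : 0 ≤ a) (ha3 : a ≤ 3) (hb : 0 ≤ b) (hb3 : b ≤ 3) :
    (∑' k : ℕ, A k a * w^k) * (∑' k : ℕ, A k b * w^k) = ∑' k : ℕ, A k (a+b) * w^k := by
  have hna : Summable (fun k : ℕ => ‖A k a * w^k‖) := by
    have : (fun k : ℕ => ‖A k a * w^k‖) = fun k => A k a * w^k := by
      funext k
      exact Real.norm_of_nonneg (mul_nonneg (A_nonneg k ha) (pow_nonneg hw0 k))
    rw [this]; exact summableA hw0 hw ha ha3
  have hnb : Summable (fun k : ℕ => ‖A k b * w^k‖) := by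
    have : (fun k : ℕ => ‖A k b * w^k‖) = fun k => A k b * w^k := by
      funext k
      exact Real.norm_of_nonneg (mul_nonneg (A_nonneg k hb) (pow_nonneg hw0 k))
    rw [this]; exact summableA hw0 hw hb hb3
  rw [tsum_mul_tsum_eq_tsum_sum_range_of_summable_norm hna hnb]
  apply tsum_congr
  intro j
  have : ∀ k ∈ Finset.range (j+1),
      (A k a * w^k) * (A (j-k) b * w^(j-k)) = (A k a * A (j-k) b) * w^j := by
    intro k hk
    have hk' : k ≤ j := Nat.lt_succ_iff.mp (Finset.mem_range.mp hk)
    rw [show (A k a * w^k) * (A (j-k) b * w^(j-k)) = (A k a * A (j-k) b) * (w^k * w^(j-k)) from by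
      ring, ← pow_add, Nat.add_sub_cancel' hk']
  rw [Finset.sum_congr rfl this, ← Finset.sum_mul, A_conv j a b]

lemma f1_funeq {w : ℝ} (hw0 : 0 ≤ w) (hw : w ≤ 9/64) :
    (∑' k : ℕ, A k 1 * w^k) = 1 + w * (∑' k : ℕ, A k 1 * w^k)^3 := by
  have h2 : (∑' k : ℕ, A k 1 * w^k)^2 = ∑' k : ℕ, A k 2 * w^k := by
    rw [sq, f_mul hw0 hw (by norm_num) (by norm_num) (by norm_num) (by norm_num)]
    norm_num
  have h3 : (∑' k : ℕ, A k 1 * w^k)^3 = ∑' k : ℕ, A k 3 * w^k := by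
    rw [pow_succ, h2, f_mul hw0 hw (by norm_num) (by norm_num) (by norm_num) (by norm_num)]
    norm_num
  rw [h3]
  have hshift : (∑' k : ℕ, A k 3 * w^k) = ∑' k : ℕ, A (k+1) 1 * w^k := by
    apply tsum_congr; intro k; rw [A13]
  rw [hshift]
  have hs1 : Summable (fun k : ℕ => A k 1 * w^k) := summableA hw0 hw (by norm_num) (by norm_num)
  rw [← tsum_mul_left]
  have := Summable.tsum_eq_zero_add hs1
  rw [this, A_zero, pow_zero]
  congr 1
  · norm_num
  · apply tsum_congr; intro k; rw [pow_succ]; ring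

lemma Aval : A 0 1 = 1 ∧ A 1 1 = 1 ∧ A 2 1 = 3 ∧ A 3 1 = 12 ∧ A 4 1 = 55 ∧ A 5 1 = 273 := by
  refine ⟨A_zero 1, ?_, ?_, ?_, ?_, ?_⟩ <;>
    · rw [A_succ']
      norm_num [pp, Finset.prod_range_succ, Nat.factorial]

lemma f1_le {w : ℝ} (hw0 : 0 ≤ w) (hw : w ≤ 9/64) :
    (∑' k : ℕ, A k 1 * w^k) ≤ 39/25 := by
  obtain ⟨a0, a1, a2, a3, a4, a5⟩ := Aval
  have hs1 : Summable (fun k : ℕ => A k 1 * w^k) := summableA hw0 hw (by norm_num) (by norm_num)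
  rw [← Summable.sum_add_tsum_nat_add 5 hs1]
  have hhead : ∑ k ∈ Finset.range 5, A k 1 * w^k ≤ 21052567/16777216 := by
    have : ∀ k ∈ Finset.range 5, A k 1 * w^k ≤ A k 1 * (9/64:ℝ)^k := by
      intro k _
      exact mul_le_mul_of_nonneg_left (pow_le_pow_left₀ hw0 hw k) (A_nonneg k (by norm_num))
    calc ∑ k ∈ Finset.range 5, A k 1 * w^k ≤ ∑ k ∈ Finset.range 5, A k 1 * (9/64:ℝ)^k :=
          Finset.sum_le_sum this
      _ = 21052567/16777216 := by
          rw [Finset.sum_range_succ, Finset.sum_range_succ, Finset.sum_range_succ,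
            Finset.sum_range_succ, Finset.sum_range_succ, Finset.sum_range_zero,
            a0, a1, a2, a3, a4]
          norm_num
  have htail : ∀ k : ℕ, A (k+5) 1 * w^(k+5) ≤ (273*(9/64:ℝ)^5) * (243/256)^k := by
    intro k
    induction k with
    | zero =>
      simp only [Nat.zero_add, pow_zero, mul_one]
      calc A 5 1 * w^5 ≤ A 5 1 * (9/64:ℝ)^5 :=
            mul_le_mul_of_nonneg_left (pow_le_pow_left₀ hw0 hw 5) (A_nonneg 5 (by norm_num))
        _ = 273*(9/64:ℝ)^5 := by rw [a5]
    | succ k ih =>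
      have step : A (k+5+1) 1 * w^(k+5+1) ≤ (243/256) * (A (k+5) 1 * w^(k+5)) := by
        rw [pow_succ]
        calc A (k+5+1) 1 * (w^(k+5) * w) ≤ ((27/4) * A (k+5) 1) * (w^(k+5) * w) :=
              mul_le_mul_of_nonneg_right (A1_step (k+5))
                (mul_nonneg (pow_nonneg hw0 _) hw0)
          _ ≤ ((27/4) * A (k+5) 1) * (w^(k+5) * (9/64)) := by
              apply mul_le_mul_of_nonneg_left
                (mul_le_mul_of_nonneg_left hw (pow_nonneg hw0 _))
                (mul_nonneg (by norm_num) (A_nonneg _ (by norm_num)))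
          _ = (243/256) * (A (k+5) 1 * w^(k+5)) := by ring
      calc A (k+1+5) 1 * w^(k+1+5) = A (k+5+1) 1 * w^(k+5+1) := by ring_nf
        _ ≤ (243/256) * (A (k+5) 1 * w^(k+5)) := step
        _ ≤ (243/256) * ((273*(9/64:ℝ)^5) * (243/256)^k) := by
              apply mul_le_mul_of_nonneg_left ih (by norm_num)
        _ = (273*(9/64:ℝ)^5) * (243/256)^(k+1) := by ring
  have htsum : (∑' k : ℕ, A (k+5) 1 * w^(k+5)) ≤ (273*(9/64:ℝ)^5) * (256/13) := by
    have hgs : Summable (fun k : ℕ => (273*(9/64:ℝ)^5) * (243/256)^k) :=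
      (summable_geometric_of_lt_one (by norm_num) (by norm_num)).mul_left _
    have hs5 : Summable (fun k : ℕ => A (k+5) 1 * w^(k+5)) := by
      have h := (summable_nat_add_iff (f := fun k : ℕ => A k 1 * w^k) 5).mpr hs1
      simpa using h
    calc (∑' k : ℕ, A (k+5) 1 * w^(k+5))
        ≤ ∑' k : ℕ, (273*(9/64:ℝ)^5) * (243/256)^k :=
          Summable.tsum_le_tsum htail hs5 hgs
      _ = (273*(9/64:ℝ)^5) * ∑' k : ℕ, (243/256:ℝ)^k := tsum_mul_left
      _ = (273*(9/64:ℝ)^5) * (256/13) := by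
          rw [tsum_geometric_of_lt_one (by norm_num) (by norm_num)]
          norm_num
  have : (273*(9/64:ℝ)^5) * (256/13) = 1240029/4194304 := by norm_num
  rw [this] at htsum
  linarith

lemma w_range {u : ℝ} (hu0 : 0 < u) (hu : u ≤ 1/4) :
    0 ≤ u*(1-u)^2 ∧ u*(1-u)^2 ≤ 9/64 := by
  constructor
  · positivity
  · nlinarith [sq_nonneg (u - 1/4), sq_nonneg u, hu0.le]

lemma f1_eq {u : ℝ} (hu0 : 0 < u) (hu : u ≤ 1/4) :
    (∑' k : ℕ, A k 1 * (u*(1-u)^2)^k) = 1/(1-u) := by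
  obtain ⟨hw0, hw⟩ := w_range hu0 hu
  set w := u*(1-u)^2 with hwdef
  set B := ∑' k : ℕ, A k 1 * w^k with hB
  have hfe : B = 1 + w * B^3 := f1_funeq hw0 hw
  have hBle : B ≤ 39/25 := f1_le hw0 hw
  have hB0 : 0 ≤ B := tsum_nonneg fun k => mul_nonneg (A_nonneg k (by norm_num)) (pow_nonneg hw0 k)
  set β : ℝ := 1/(1-u) with hβ
  have h1u : (0:ℝ) < 1 - u := by linarith
  have hβfe : β = 1 + w * β^3 := by
    rw [hβ, hwdef]
    field_simp
    ring
  have hβle : β ≤ 4/3 := by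
    rw [hβ, div_le_iff₀ h1u]
    linarith
  have hβ0 : 0 ≤ β := by positivity
  have hfact : (B - β) * (1 - w * (B^2 + B*β + β^2)) = 0 := by
    have : B - β = w * (B^3 - β^3) := by linarith
    nlinarith [this]
  have hlt : w * (B^2 + B*β + β^2) < 1 := by
    have h1 : B^2 ≤ (39/25)^2 := by nlinarith
    have h2 : B*β ≤ (39/25)*(4/3) := by nlinarith
    have h3 : β^2 ≤ (4/3)^2 := by nlinarith
    nlinarith [mul_nonneg hB0 hβ0, sq_nonneg B, sq_nonneg β]
  have : B = β := by
    rcases mul_eq_zero.mp hfact with h | h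
    · linarith
    · linarith
  exact this

lemma fhalf_eq {u : ℝ} (hu0 : 0 < u) (hu : u ≤ 1/4) :
    (∑' k : ℕ, A k (1/2) * (u*(1-u)^2)^k) = Real.sqrt (1/(1-u)) := by
  obtain ⟨hw0, hw⟩ := w_range hu0 hu
  set w := u*(1-u)^2 with hwdef
  have hsq : (∑' k : ℕ, A k (1/2) * w^k)^2 = 1/(1-u) := by
    rw [sq, f_mul hw0 hw (by norm_num) (by norm_num) (by norm_num) (by norm_num)]
    rw [show (1:ℝ)/2 + 1/2 = 1 from by norm_num, hwdef, f1_eq hu0 hu]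
  have hpos : 0 ≤ ∑' k : ℕ, A k (1/2) * w^k :=
    tsum_nonneg fun k => mul_nonneg (A_nonneg k (by norm_num)) (pow_nonneg hw0 k)
  rw [← hsq, Real.sqrt_sq hpos]

lemma sf_pp (x : ℝ) (k : ℕ) : shiftedFactorial x k = pp x k := rfl

lemma term_eq (k : ℕ) :
    shiftedFactorial (1/2) k * shiftedFactorial (1/6) k * shiftedFactorial (5/6) k /
      ((Nat.factorial k : ℝ) * shiftedFactorial (3/4) k * shiftedFactorial (5/4) k) * (27/4:ℝ)^k
      = A k (1/2) := by
  rw [sf_pp, sf_pp, sf_pp, sf_pp, sf_pp]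
  have hde : (0:ℝ) < (Nat.factorial k : ℝ) * pp (3/4) k * pp (5/4) k := by
    have := pp_pos (show (0:ℝ) < 3/4 by norm_num) k
    have := pp_pos (show (0:ℝ) < 5/4 by norm_num) k
    have := Nat.factorial_pos k
    positivity
  rw [div_mul_eq_mul_div, div_eq_iff hde.ne']
  exact coeff_eq' k

theorem sqrt_series_3F2_pos (p m n : ℕ) (hp : 0 < p) (hps : ¬ IsSquare p)
    (hm : 0 < m) (hn : 0 < n) (hpell : (n : ℤ) ^ 2 - p * m ^ 2 = 1)
    (hextra : 4 * ((p : ℤ) * m ^ 2 + 1) ^ 3 > 27 * p ^ 2 * m ^ 4) :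
    Summable (fun k : ℕ => shiftedFactorial (1/2) k * shiftedFactorial (1/6) k * shiftedFactorial (5/6) k / ((Nat.factorial k : ℝ) * shiftedFactorial (3/4) k * shiftedFactorial (5/4) k) * (27 * p ^ 2 * m ^ 4 / (4 * (p * m ^ 2 + 1) ^ 3) : ℝ) ^ k) ∧
    Real.sqrt p = (m * p / n : ℝ) *
      ∑' k : ℕ, shiftedFactorial (1/2) k * shiftedFactorial (1/6) k * shiftedFactorial (5/6) k / ((Nat.factorial k : ℝ) * shiftedFactorial (3/4) k * shiftedFactorial (5/4) k) * (27 * p ^ 2 * m ^ 4 / (4 * (p * m ^ 2 + 1) ^ 3) : ℝ) ^ k := by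
  -- basic numeric facts
  have hp2 : 2 ≤ p := by
    rcases Nat.lt_or_ge p 2 with h | h
    · interval_cases p
      exact absurd ⟨1, rfl⟩ hps
    · exact h
  have hn2' : (n:ℤ)^2 = p * m^2 + 1 := by linarith
  have hnn : 2 ≤ n := by
    by_contra h
    push_neg at h
    interval_cases n
    norm_num at hn2'
    rcases hn2' with h' | h'
    · omega
    · omega
  have hn2 : (n:ℝ)^2 = (p:ℝ) * (m:ℝ)^2 + 1 := by exact_mod_cast hn2'
  have hnne : (n:ℝ) ≠ 0 := by positivity
  have hmne : (m:ℝ) ≠ 0 := by positivity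
  have hpne : (p:ℝ) ≠ 0 := by positivity
  set u : ℝ := 1 / (n:ℝ)^2 with hudef
  have hu0 : 0 < u := by positivity
  have hu : u ≤ 1/4 := by
    rw [hudef, div_le_div_iff₀ (by positivity) (by norm_num)]
    have : (2:ℝ) ≤ (n:ℝ) := by exact_mod_cast hnn
    nlinarith
  have h1u : 1 - u = (p:ℝ) * (m:ℝ)^2 / (n:ℝ)^2 := by
    rw [hudef]
    field_simp
    linarith [hn2]
  have hz : (27 * (p:ℝ) ^ 2 * (m:ℝ) ^ 4 / (4 * ((p:ℝ) * (m:ℝ) ^ 2 + 1) ^ 3) : ℝ)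
      = (27/4) * (u * (1-u)^2) := by
    rw [h1u, hudef, show ((p:ℝ) * (m:ℝ)^2 + 1) = (n:ℝ)^2 from by linarith [hn2]]
    field_simp
  obtain ⟨hw0, hw⟩ := w_range hu0 hu
  have hterm : (fun k : ℕ => shiftedFactorial (1/2) k * shiftedFactorial (1/6) k *
        shiftedFactorial (5/6) k / ((Nat.factorial k : ℝ) * shiftedFactorial (3/4) k *
        shiftedFactorial (5/4) k) * (27 * p ^ 2 * m ^ 4 / (4 * (p * m ^ 2 + 1) ^ 3) : ℝ) ^ k)
      = fun k : ℕ => A k (1/2) * (u * (1-u)^2)^k := by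
    funext k
    push_cast
    rw [hz, mul_pow, ← mul_assoc, ← term_eq k]
  constructor
  · rw [hterm]
    exact summableA hw0 hw (by norm_num) (by norm_num)
  · rw [hterm, fhalf_eq hu0 hu]
    have hsq : Real.sqrt (1/(1-u)) = (n:ℝ) / ((m:ℝ) * Real.sqrt p) := by
      have hsp : (0:ℝ) < Real.sqrt p := Real.sqrt_pos.mpr (by positivity)
      rw [show (1/(1-u)) = ((n:ℝ) / ((m:ℝ) * Real.sqrt p))^2 from ?_]
      · exact Real.sqrt_sq (by positivity)
      · rw [h1u]
        rw [div_pow, mul_pow, Real.sq_sqrt (by positivity : (0:ℝ) ≤ (p:ℝ))]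
        field_simp
    rw [hsq]
    have hsp : (0:ℝ) < Real.sqrt p := Real.sqrt_pos.mpr (by positivity)
    rw [div_mul_div_comm, eq_div_iff (by positivity : ((n:ℝ) * ((m:ℝ) * Real.sqrt p)) ≠ 0)]
    have hss : Real.sqrt p * Real.sqrt p = p := Real.mul_self_sqrt (by positivity)
    linear_combination ((n:ℝ) * (m:ℝ)) * hss
end
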